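/- arXiv:math/9911183 — 3 statements merged into one kernel-verified Lean document; each statement's English description precedes it below -/
import Mathlib

section
/- Let Q be a proximity matrix satisfying the Enriques axioms (E1)–(E4) and ε a branch vector for Q; let z be the fundamental cycle. If ε_k = 1 and s_{kk} = −2 (so F_k is a (−1)-curve of the canonical resolution), then z_k = ∑_{i ≠ k, s_{ik} = 1} z_i, i.e. the coefficient of the fundamental cycle at F_k equals the sum of its coefficients at the exceptional curves meeting F_k. -/
open Matrix Finset

/-- A proximity matrix: strictly upper triangular with entries `0` or `1`. -/
def IsProxMat {n : ℕ} (Q : Matrix (Fin n) (Fin n) ℤ) : Prop :=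
  (∀ i j : Fin n, ¬ i < j → Q i j = 0) ∧ (∀ i j : Fin n, Q i j = 0 ∨ Q i j = 1)

/-- `M = N⁻¹ = 1 + Q + ⋯ + Q^(n-1)`. -/
def Mmat {n : ℕ} (Q : Matrix (Fin n) (Fin n) ℤ) : Matrix (Fin n) (Fin n) ℤ :=
  ∑ k ∈ Finset.range n, Q ^ k

/-- The intersection matrix `S = -(1-Q)(1-Q)ᵀ` of the exceptional curves. -/
def Smat {n : ℕ} (Q : Matrix (Fin n) (Fin n) ℤ) : Matrix (Fin n) (Fin n) ℤ :=
  -((1 - Q) * (1 - Q)ᵀ)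

/-- The Enriques axioms (E1)–(E4) for a proximity matrix. -/
def EnriquesAxioms {n : ℕ} (Q : Matrix (Fin n) (Fin n) ℤ) : Prop :=
  (∀ j : Fin n, 0 < j.val → ∃ i : Fin n, i < j ∧ Q i j = 1) ∧
  (∀ j : Fin n, (Finset.univ.filter fun i => Q i j = 1).card ≤ 2) ∧
  (∀ i j k : Fin n, i < j → Q i k = 1 → Q j k = 1 → Q i j = 1) ∧
  (∀ i j : Fin n, i < j → ∀ k k' : Fin n,
    Q i k = 1 → Q j k = 1 → Q i k' = 1 → Q j k' = 1 → k = k')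

/-- A branch vector for `Q`: each `ε i ∈ {0,1}`, and `s_{ij}` is even whenever
`ε_i = ε_j = 1`. -/
def IsBranchVec {n : ℕ} (Q : Matrix (Fin n) (Fin n) ℤ) (ε : Fin n → ℤ) : Prop :=
  (∀ i, ε i = 0 ∨ ε i = 1) ∧ ∀ i j, ε i = 1 → ε j = 1 → 2 ∣ Smat Q i j

/-- The intersection matrix `T_{ij} = (2 - ε_i)(2 - ε_j) s_{ij} / 2` of the
exceptional curves `F_i` of the canonical resolution. -/
def Tmat {n : ℕ} (Q : Matrix (Fin n) (Fin n) ℤ) (ε : Fin n → ℤ) :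
    Matrix (Fin n) (Fin n) ℤ :=
  fun i j => (2 - ε i) * (2 - ε j) * Smat Q i j / 2

/-- The fiber vector `f_i = (1 + ε_i) m_{1i}` (with first blown-up point `i0`). -/
def fiberVec {n : ℕ} (Q : Matrix (Fin n) (Fin n) ℤ) (ε : Fin n → ℤ) (i0 : Fin n) :
    Fin n → ℤ :=
  fun i => (1 + ε i) * Mmat Q i0 i

/-- `z` is the fundamental cycle for the intersection matrix `T`: the
componentwise-least vector with `z_i ≥ 1` for all `i` and `(T z)_k ≤ 0` for all `k`. -/
def IsFundCycle {n : ℕ} (T : Matrix (Fin n) (Fin n) ℤ) (z : Fin n → ℤ) : Prop :=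
  (∀ i, 1 ≤ z i) ∧ (∀ k, (T *ᵥ z) k ≤ 0) ∧
  ∀ w : Fin n → ℤ, (∀ i, 1 ≤ w i) → (∀ k, (T *ᵥ w) k ≤ 0) → z ≤ w

lemma Smat_symm {n : ℕ} (Q : Matrix (Fin n) (Fin n) ℤ) (i j : Fin n) :
    Smat Q i j = Smat Q j i := by
  simp only [Smat, Matrix.neg_apply, Matrix.mul_apply, Matrix.transpose_apply]
  congr 1
  exact Finset.sum_congr rfl fun l _ => mul_comm _ _

lemma Smat_apply_eq {n : ℕ} (Q : Matrix (Fin n) (Fin n) ℤ) (i j : Fin n) :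
    Smat Q i j = -(if i = j then 1 else 0) + Q i j + Q j i - ∑ l, Q i l * Q j l := by
  simp only [Smat, Matrix.neg_apply, Matrix.mul_apply, Matrix.transpose_apply,
    Matrix.sub_apply, Matrix.one_apply]
  have h : ∀ l : Fin n, ((if i = l then (1:ℤ) else 0) - Q i l) *
      ((if j = l then (1:ℤ) else 0) - Q j l) =
      ((if i = l then (1:ℤ) else 0) * (if j = l then 1 else 0)
        - (if i = l then (1:ℤ) else 0) * Q j l)
        - ((if j = l then (1:ℤ) else 0) * Q i l - Q i l * Q j l) := by
    intro l; ring
  rw [Finset.sum_congr rfl fun l _ => h l, Finset.sum_sub_distrib, Finset.sum_sub_distrib,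
    Finset.sum_sub_distrib]
  simp [Finset.mul_sum, ite_mul, eq_comm]
  ring

lemma sum_prod_eq_card {n : ℕ} (Q : Matrix (Fin n) (Fin n) ℤ) (hQ : IsProxMat Q)
    (i j : Fin n) :
    ∑ l, Q i l * Q j l =
      ((Finset.univ.filter fun l => Q i l = 1 ∧ Q j l = 1).card : ℤ) := by
  rw [Finset.card_filter]
  push_cast
  refine Finset.sum_congr rfl fun l _ => ?_
  rcases hQ.2 i l with h1 | h1 <;> rcases hQ.2 j l with h2 | h2 <;>
    simp [h1, h2]

lemma Smat_offdiag_lt {n : ℕ} (Q : Matrix (Fin n) (Fin n) ℤ) (hQ : IsProxMat Q)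
    (hE : EnriquesAxioms Q) (i j : Fin n) (hij : i < j) :
    Smat Q i j = 0 ∨ Smat Q i j = 1 := by
  have hji : Q j i = 0 := hQ.1 j i (by omega)
  have hf := Smat_apply_eq Q i j
  rw [sum_prod_eq_card Q hQ] at hf
  rw [if_neg (by exact fun h => absurd h (Fin.ne_of_lt hij))] at hf
  set F := Finset.univ.filter fun l => Q i l = 1 ∧ Q j l = 1 with hF
  rcases Finset.eq_empty_or_nonempty F with he | ⟨l, hl⟩
  · rw [he] at hf
    simp [hji] at hf
    rw [hf]
    exact hQ.2 i j
  · simp only [hF, Finset.mem_filter] at hl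
    have hij1 : Q i j = 1 := hE.2.2.1 i j l hij hl.2.1 hl.2.2
    have hcard : F.card = 1 := by
      rw [Finset.card_eq_one]
      refine ⟨l, Finset.eq_singleton_iff_unique_mem.2 ⟨by simp [hF, hl.2.1, hl.2.2], ?_⟩⟩
      intro x hx
      simp only [hF, Finset.mem_filter] at hx
      exact hE.2.2.2 i j hij x l hx.2.1 hx.2.2 hl.2.1 hl.2.2
    left
    rw [hf, hcard, hij1, hji]
    ring

lemma Smat_offdiag {n : ℕ} (Q : Matrix (Fin n) (Fin n) ℤ) (hQ : IsProxMat Q)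
    (hE : EnriquesAxioms Q) (i j : Fin n) (hij : i ≠ j) :
    Smat Q i j = 0 ∨ Smat Q i j = 1 := by
  rcases lt_or_gt_of_ne hij with h | h
  · exact Smat_offdiag_lt Q hQ hE i j h
  · rw [Smat_symm]
    exact Smat_offdiag_lt Q hQ hE j i h

lemma row_sum_eq_card {n : ℕ} (Q : Matrix (Fin n) (Fin n) ℤ) (hQ : IsProxMat Q)
    (k : Fin n) :
    ∑ l, Q k l = ((Finset.univ.filter fun l => Q k l = 1).card : ℤ) := by
  rw [Finset.card_filter]
  push_cast
  exact Finset.sum_congr rfl fun l _ => by rcases hQ.2 k l with h | h <;> simp [h]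

lemma exists_meet {n : ℕ} (Q : Matrix (Fin n) (Fin n) ℤ) (hQ : IsProxMat Q)
    (k : Fin n) (hk2 : Smat Q k k = -2) :
    ∃ j : Fin n, j ≠ k ∧ Smat Q k j = 1 := by
  have hkk : Q k k = 0 := hQ.1 k k (lt_irrefl k)
  have hf := Smat_apply_eq Q k k
  have hsq : ∀ l, Q k l * Q k l = Q k l := fun l => by
    rcases hQ.2 k l with h | h <;> simp [h]
  rw [Finset.sum_congr rfl fun l _ => hsq l, if_pos rfl, hkk, hk2] at hf
  have hsum : ∑ l, Q k l = 1 := by linarith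
  rw [row_sum_eq_card Q hQ] at hsum
  have hcard : (Finset.univ.filter fun l => Q k l = 1).card = 1 := by exact_mod_cast hsum
  obtain ⟨j, hj⟩ := Finset.card_eq_one.1 hcard
  have hjmem : Q k j = 1 := by
    have : j ∈ Finset.univ.filter fun l => Q k l = 1 := hj ▸ Finset.mem_singleton_self j
    exact (Finset.mem_filter.1 this).2
  have huniq : ∀ l, Q k l = 1 → l = j := fun l hl => by
    have : l ∈ Finset.univ.filter fun l => Q k l = 1 := Finset.mem_filter.2 ⟨Finset.mem_univ l, hl⟩
    rw [hj] at this; exact Finset.mem_singleton.1 this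
  have hkj : k < j := by
    by_contra h
    rw [hQ.1 k j h] at hjmem; exact absurd hjmem (by norm_num)
  have hjk : Q j k = 0 := hQ.1 j k (by omega)
  refine ⟨j, Fin.ne_of_gt hkj, ?_⟩
  have hfkj := Smat_apply_eq Q k j
  rw [sum_prod_eq_card Q hQ] at hfkj
  have hempty : (Finset.univ.filter fun l => Q k l = 1 ∧ Q j l = 1) = ∅ := by
    refine Finset.filter_eq_empty_iff.2 fun l _ => ?_
    rintro ⟨h1, h2⟩
    rw [huniq l h1] at h2
    rw [hQ.1 j j (lt_irrefl j)] at h2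
    exact absurd h2 (by norm_num)
  rw [hempty] at hfkj
  simp [hjmem, hjk, Fin.ne_of_lt hkj] at hfkj
  omega

set_option linter.unusedSectionVars false

section Main
variable {n : ℕ} (Q : Matrix (Fin n) (Fin n) ℤ) (hQ : IsProxMat Q)
  (hE : EnriquesAxioms Q) (ε : Fin n → ℤ) (hε : IsBranchVec Q ε)
  (k : Fin n) (hk1 : ε k = 1)

include hQ hE hε hk1 in
lemma Tmat_row_k (i : Fin n) (hik : i ≠ k) : Tmat Q ε k i = Smat Q k i := by
  unfold Tmat
  rw [hk1]
  rcases hε.1 i with h | h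
  · rw [h]
    norm_num
  · have h0 : Smat Q k i = 0 := by
      rcases Smat_offdiag Q hQ hE k i (Ne.symm hik) with h' | h'
      · exact h'
      · exfalso
        have := hε.2 k i hk1 h
        rw [h'] at this; omega
    rw [h0, h]; norm_num

include hQ hE hε hk1 in
lemma Tmat_col_k (i : Fin n) (hik : i ≠ k) : Tmat Q ε i k = Smat Q i k := by
  unfold Tmat
  rw [hk1]
  rcases hε.1 i with h | h
  · rw [h]
    norm_num
  · have h0 : Smat Q i k = 0 := by
      rcases Smat_offdiag Q hQ hE i k hik with h' | h'
      · exact h'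
      · exfalso
        have := hε.2 i k h hk1
        rw [h'] at this; omega
    rw [h0, h]; norm_num

include hQ hE hε hk1 in
lemma Tmat_kk (hk2 : Smat Q k k = -2) : Tmat Q ε k k = -1 := by
  unfold Tmat; rw [hk1, hk2]; norm_num

include hQ hE hε hk1 in
lemma mulVec_at_k (hk2 : Smat Q k k = -2) (v : Fin n → ℤ) :
    (Tmat Q ε *ᵥ v) k = -v k +
      ∑ i ∈ Finset.univ.filter (fun i : Fin n => i ≠ k ∧ Smat Q i k = 1), v i := by
  have hmv : (Tmat Q ε *ᵥ v) k = ∑ i, Tmat Q ε k i * v i := by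
    simp [Matrix.mulVec, dotProduct]
  rw [hmv, ← Finset.add_sum_erase Finset.univ _ (Finset.mem_univ k),
    Tmat_kk Q hQ hE ε hε k hk1 hk2]
  congr 1
  · ring
  rw [Finset.sum_filter]
  rw [← Finset.add_sum_erase Finset.univ
    (fun i => if i ≠ k ∧ Smat Q i k = 1 then v i else 0) (Finset.mem_univ k)]
  rw [if_neg (by simp)]
  rw [zero_add]
  refine Finset.sum_congr rfl fun i hi => ?_
  have hik : i ≠ k := (Finset.mem_erase.1 hi).1
  rw [Tmat_row_k Q hQ hE ε hε k hk1 i hik]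
  rw [Smat_symm Q k i]
  rcases Smat_offdiag Q hQ hE i k hik with h | h
  · rw [if_neg (fun hc => by rw [h] at hc; exact absurd hc.2 (by norm_num)), h]
    ring
  · rw [if_pos ⟨hik, h⟩, h]; ring

end Main

set_option linter.unusedVariables false

/-- If `ε_k = 1` and `s_{kk} = -2` (so `F_k` is a `(-1)`-curve of the
canonical resolution), then the coefficient of the fundamental cycle at `F_k` is the
sum of its coefficients at the exceptional curves meeting `F_k`:
`z_k = ∑_{i ≠ k, s_{ik} = 1} z_i`. -/
theorem fundamental_cycle_coeff_at_minus_one_curve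
    (n : ℕ) (hn : 1 ≤ n) (Q : Matrix (Fin n) (Fin n) ℤ)
    (hQ : IsProxMat Q) (hE : EnriquesAxioms Q)
    (ε : Fin n → ℤ) (hε : IsBranchVec Q ε)
    (z : Fin n → ℤ) (hz : IsFundCycle (Tmat Q ε) z)
    (k : Fin n) (hk1 : ε k = 1) (hk2 : Smat Q k k = -2) :
    z k = ∑ i ∈ Finset.univ.filter (fun i : Fin n => i ≠ k ∧ Smat Q i k = 1), z i := by
  set F := Finset.univ.filter (fun i : Fin n => i ≠ k ∧ Smat Q i k = 1) with hF
  have hkey := mulVec_at_k Q hQ hE ε hε k hk1 hk2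
  rw [← hF] at hkey
  have hub : ∑ i ∈ F, z i ≤ z k := by
    have := hz.2.1 k
    rw [hkey z] at this
    omega
  obtain ⟨j, hjk, hj⟩ := exists_meet Q hQ k hk2
  have hjF : j ∈ F := Finset.mem_filter.2 ⟨Finset.mem_univ j, hjk, by rw [Smat_symm]; exact hj⟩
  have hsum1 : 1 ≤ ∑ i ∈ F, z i := by
    calc 1 ≤ z j := hz.1 j
    _ ≤ ∑ i ∈ F, z i :=
      Finset.single_le_sum (fun i _ => le_trans zero_le_one (hz.1 i)) hjF
  by_contra hne
  have hlt : ∑ i ∈ F, z i + 1 ≤ z k := by omega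
  classical
  let w : Fin n → ℤ := fun i => if i = k then z k - 1 else z i
  have hwk : w k = z k - 1 := by simp [w]
  have hwi : ∀ i, i ≠ k → w i = z i := fun i h => by simp [w, h]
  have hw1 : ∀ i, 1 ≤ w i := by
    intro i
    by_cases h : i = k
    · subst h; rw [hwk]; omega
    · rw [hwi i h]; exact hz.1 i
  have hdiff : ∀ l, (Tmat Q ε *ᵥ w) l = (Tmat Q ε *ᵥ z) l - Tmat Q ε l k := by
    intro l
    have h1 : (Tmat Q ε *ᵥ w) l = ∑ i, Tmat Q ε l i * w i := by
      simp [Matrix.mulVec, dotProduct]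
    have h2 : (Tmat Q ε *ᵥ z) l = ∑ i, Tmat Q ε l i * z i := by
      simp [Matrix.mulVec, dotProduct]
    have hterm : ∀ i : Fin n, Tmat Q ε l i * w i =
        Tmat Q ε l i * z i - (if i = k then Tmat Q ε l k else 0) := by
      intro i
      by_cases h : i = k
      · subst h; rw [hwk, if_pos rfl]; ring
      · rw [hwi i h, if_neg h]; ring
    rw [h1, h2, Finset.sum_congr rfl fun i _ => hterm i, Finset.sum_sub_distrib]
    simp
  have hw2 : ∀ l, (Tmat Q ε *ᵥ w) l ≤ 0 := by
    intro l
    rw [hdiff l]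
    by_cases h : l = k
    · rw [h, Tmat_kk Q hQ hE ε hε k hk1 hk2, hkey z]
      omega
    · have hT : Tmat Q ε l k = Smat Q l k :=
        Tmat_col_k Q hQ hE ε hε k hk1 l h
      have hS : 0 ≤ Smat Q l k := by
        rcases Smat_offdiag Q hQ hE l k h with h' | h' <;> omega
      have := hz.2.1 l
      omega
  have hle : z k ≤ w k := hz.2.2 w hw1 hw2 k
  rw [hwk] at hle
  omega
end

section
/- Let Q be a proximity matrix (n×n, strictly upper triangular, entries 0 or 1) and let α̃ ∈ ℤⁿ be arbitrary. Set β̃ = α̃ M, γ̃ = α̃ Nᵀ, and ε_i = β̃_i mod 2 ∈ {0,1}. Then for every i with ε_i = 0, the integer γ_i := γ̃_i + ∑_{j ≠ i} ε_j s_{ij} is even. (The branch curve B of the canonical resolution meets every unbranched exceptional curve E_i in a divisor of even degree γ_i = B·E_i.) -/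
open Matrix Finset

/-- A multiplicity vector for `Q`: nonnegative entries satisfying the proximity
inequalities `α̃_i ≥ ∑_j q_{ij} α̃_j`. -/
def IsMultVec {n : ℕ} (Q : Matrix (Fin n) (Fin n) ℤ) (a : Fin n → ℤ) : Prop :=
  (∀ i, 0 ≤ a i) ∧ ∀ i, (∑ j, Q i j * a j) ≤ a i

/-- `β̃ = α̃ M`: multiplicities of the total transform of the branch curve. -/
def betaVec {n : ℕ} (Q : Matrix (Fin n) (Fin n) ℤ) (a : Fin n → ℤ) : Fin n → ℤ :=
  a ᵥ* Mmat Q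

/-- `γ̃ = α̃ Nᵀ`: intersection degrees of the proper transform of the branch curve
with the exceptional curves. -/
def gammaVec {n : ℕ} (Q : Matrix (Fin n) (Fin n) ℤ) (a : Fin n → ℤ) : Fin n → ℤ :=
  a ᵥ* (1 - Q)ᵀ

/-- `ε_i = β̃_i mod 2`: the branchedness of the `i`-th exceptional curve. -/
def epsVec {n : ℕ} (Q : Matrix (Fin n) (Fin n) ℤ) (a : Fin n → ℤ) : Fin n → ℤ :=
  fun i => betaVec Q a i % 2

/-- `μ = α̃ + ε Q`: the multiplicities of the total branch curves at the blown-up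
points. -/
def muVec {n : ℕ} (Q : Matrix (Fin n) (Fin n) ℤ) (a : Fin n → ℤ) : Fin n → ℤ :=
  fun i => a i + (epsVec Q a ᵥ* Q) i

/-- `α = μ - ε`. -/
def alphaVec {n : ℕ} (Q : Matrix (Fin n) (Fin n) ℤ) (a : Fin n → ℤ) : Fin n → ℤ :=
  fun i => muVec Q a i - epsVec Q a i

/-- The terminal conditions of the canonical resolution: `γ̃_i = 0` whenever
`ε_i = 1`; `s_{ij} = 0` whenever `i ≠ j` and `ε_i = ε_j = 1`; and `μ_i ≥ 2`. -/
def TerminalConds {n : ℕ} (Q : Matrix (Fin n) (Fin n) ℤ) (a : Fin n → ℤ) : Prop :=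
  (∀ i, epsVec Q a i = 1 → gammaVec Q a i = 0) ∧
  (∀ i j, i ≠ j → epsVec Q a i = 1 → epsVec Q a j = 1 → Smat Q i j = 0) ∧
  (∀ i, 2 ≤ muVec Q a i)

lemma prox_pow_apply {n : ℕ} {Q : Matrix (Fin n) (Fin n) ℤ} (hQ : IsProxMat Q) :
    ∀ k (i j : Fin n), (j : ℕ) < (i : ℕ) + k → (Q ^ k) i j = 0 := by
  intro k
  induction k with
  | zero =>
    intro i j h
    have : i ≠ j := by
      intro hij; subst hij; omega
    simp [Matrix.one_apply_ne this]
  | succ k ih =>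
    intro i j h
    rw [pow_succ', Matrix.mul_apply]
    apply Finset.sum_eq_zero
    intro l _
    rcases le_or_gt (l : ℕ) (i : ℕ) with hl | hl
    · have : ¬ i < l := by
        intro hc; exact absurd (Fin.lt_iff_val_lt_val.mp hc) (not_lt.mpr hl)
      rw [hQ.1 i l this, zero_mul]
    · rw [ih l j (by omega), mul_zero]

lemma prox_M_mul {n : ℕ} {Q : Matrix (Fin n) (Fin n) ℤ} (hQ : IsProxMat Q) :
    Mmat Q * (1 - Q) = 1 := by
  have hQn : Q ^ n = 0 := by
    ext i j
    have := prox_pow_apply hQ n i j (by omega)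
    simpa using this
  have hg := geom_sum_mul Q n
  rw [hQn] at hg
  have h1 : Mmat Q * (Q - 1) = -1 := by
    rw [Mmat, hg, zero_sub]
  calc Mmat Q * (1 - Q) = -(Mmat Q * (Q - 1)) := by rw [← mul_neg, neg_sub]
    _ = 1 := by rw [h1, neg_neg]

/-- For an arbitrary vector `α̃`, with `β̃ = α̃ M`, `γ̃ = α̃ Nᵀ` and
`ε_i = β̃_i mod 2`: for every `i` with `ε_i = 0`, the integer
`γ_i = γ̃_i + ∑_{j ≠ i} ε_j s_{ij}` is even (the branch curve of the canonical
resolution meets every unbranched exceptional curve in even degree). -/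
theorem branch_degree_on_unbranched_curve_even
    (n : ℕ) (hn : 1 ≤ n) (Q : Matrix (Fin n) (Fin n) ℤ)
    (hQ : IsProxMat Q) (a : Fin n → ℤ) :
    ∀ i : Fin n, epsVec Q a i = 0 →
      Even (gammaVec Q a i +
        ∑ j ∈ Finset.univ.filter (fun j : Fin n => j ≠ i), epsVec Q a j * Smat Q i j) := by
  intro i hi
  have ha : betaVec Q a ᵥ* (1 - Q) = a := by
    rw [betaVec, Matrix.vecMul_vecMul, prox_M_mul hQ, Matrix.vecMul_one]
  have hgamma : gammaVec Q a = betaVec Q a ᵥ* ((1 - Q) * (1 - Q)ᵀ) := by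
    rw [gammaVec]
    conv_lhs => rw [← ha]
    rw [Matrix.vecMul_vecMul]
  have hsymm : ∀ j, ((1 - Q) * (1 - Q)ᵀ : Matrix (Fin n) (Fin n) ℤ) j i
      = ((1 - Q) * (1 - Q)ᵀ : Matrix (Fin n) (Fin n) ℤ) i j := by
    intro j
    have h : ((1 - Q) * (1 - Q)ᵀ)ᵀ = ((1 - Q) * (1 - Q)ᵀ : Matrix (Fin n) (Fin n) ℤ) := by
      rw [Matrix.transpose_mul, Matrix.transpose_transpose]
    exact congrFun (congrFun h i) j
  have hval : gammaVec Q a i = ∑ j, betaVec Q a j * (-(Smat Q i j)) := by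
    rw [hgamma]
    simp only [Matrix.vecMul, dotProduct, Smat, Matrix.neg_apply, neg_neg]
    exact Finset.sum_congr rfl fun j _ => by rw [hsymm j]
  rw [hval, Finset.filter_ne', ← Finset.add_sum_erase Finset.univ _ (Finset.mem_univ i),
    add_assoc, add_comm (∑ j ∈ Finset.univ.erase i, betaVec Q a j * -Smat Q i j),
    ← Finset.sum_add_distrib]
  apply Even.add
  · have hbe : Even (betaVec Q a i) := Int.even_iff.mpr hi
    exact hbe.mul_right _
  · rw [even_iff_two_dvd]
    apply Finset.dvd_sum
    intro j _
    have h2 : (2 : ℤ) ∣ (betaVec Q a j % 2 - betaVec Q a j) := by omega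
    have heq : epsVec Q a j * Smat Q i j + betaVec Q a j * -Smat Q i j
        = (betaVec Q a j % 2 - betaVec Q a j) * Smat Q i j := by
      rw [epsVec]; ring
    rw [heq]
    exact h2.mul_right _
end

section
/- Let Q be a proximity matrix satisfying the Enriques axioms (E1)–(E4) and let α̃ be a multiplicity vector for Q satisfying the terminal conditions of the canonical resolution, with ε_i = β̃_i mod 2 as associated branch data. Suppose there exists j > 1 with ε_j = 0, q_j infinitely near of order one to q_1 (q_{1j} = 1 and q_{ij} = 0 for all i ≠ 1), and m_{1i} + m_{ji} even for every i with ε_i = 0 (i.e. the fundamental cycle of the canonical resolution is strictly contained in the fiber cycle). Then α̃_1 and α̃_j are odd and α̃_1 ≡ α̃_j (mod 4); in particular α̃_1 + α̃_j ≡ 2 (mod 4). -/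
open Matrix Finset

lemma pow_apply_eq_zero' {n : ℕ} (Q : Matrix (Fin n) (Fin n) ℤ)
    (hQ : ∀ i j : Fin n, ¬ i < j → Q i j = 0) :
    ∀ (k : ℕ) (i j : Fin n), (j : ℕ) < (i : ℕ) + k → (Q ^ k) i j = 0 := by
  intro k
  induction k with
  | zero =>
    intro i j h
    simp only [pow_zero, Matrix.one_apply]
    exact if_neg fun he => by subst he; omega
  | succ k ih =>
    intro i j h
    rw [pow_succ, Matrix.mul_apply]
    apply Finset.sum_eq_zero
    intro l _
    by_cases hl : (l : ℕ) < (i : ℕ) + k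
    · rw [ih i l hl, zero_mul]
    · rw [hQ l j (by intro hlt; rw [Fin.lt_def] at hlt; omega), mul_zero]

lemma Mmat_mul_one_sub' {n : ℕ} (Q : Matrix (Fin n) (Fin n) ℤ)
    (hQ : ∀ i j : Fin n, ¬ i < j → Q i j = 0) :
    Mmat Q * (1 - Q) = 1 := by
  have hQn : Q ^ n = 0 := by
    ext i j
    rw [pow_apply_eq_zero' Q hQ n i j (by omega)]
    simp
  have hg := geom_sum_mul Q n
  rw [hQn] at hg
  unfold Mmat
  rw [show (1 - Q) = -(Q - 1) by rw [neg_sub], mul_neg, hg]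
  simp

lemma cast_eq_one_iff_odd (z : ℤ) (h : ((z : ZMod 2)) = 1) : z % 2 = 1 := by
  rcases Int.emod_two_eq z with h0 | h0
  · exfalso
    have h1 : ((z : ZMod 2)) = 0 :=
      (ZMod.intCast_zmod_eq_zero_iff_dvd z 2).2 (Int.dvd_of_emod_eq_zero h0)
    rw [h1] at h; exact absurd h (by decide)
  · exact h0

lemma cast_eq_zero_iff_even (z : ℤ) (h : ((z : ZMod 2)) = 0) : z % 2 = 0 := by
  have h2 := (ZMod.intCast_zmod_eq_zero_iff_dvd z 2).1 h
  norm_num at h2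
  omega


set_option maxHeartbeats 1600000 in
/-- Suppose the fundamental cycle of the canonical resolution is
strictly contained in the fiber cycle, i.e. there is `j > 1` with `ε_j = 0`, `q_j`
infinitely near of order one to `q_1`, and `m_{1i} + m_{ji}` even for all `i` with
`ε_i = 0`.  Then `α̃_1` and `α̃_j` are odd, `α̃_1 ≡ α̃_j (mod 4)`, and in particular
`α̃_1 + α̃_j ≡ 2 (mod 4)`. -/
theorem multiplicities_mod_four
    (n : ℕ) (hn : 1 ≤ n) (Q : Matrix (Fin n) (Fin n) ℤ)
    (hQ : IsProxMat Q) (hE : EnriquesAxioms Q)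
    (a : Fin n → ℤ) (ha : IsMultVec Q a) (hterm : TerminalConds Q a)
    (j : Fin n) (hj0 : j ≠ ⟨0, hn⟩) (hj1 : epsVec Q a j = 0)
    (hj2 : Q ⟨0, hn⟩ j = 1 ∧ ∀ i : Fin n, i ≠ ⟨0, hn⟩ → Q i j = 0)
    (hj3 : ∀ i : Fin n, epsVec Q a i = 0 →
      2 ∣ (Mmat Q ⟨0, hn⟩ i + Mmat Q j i)) :
    Odd (a ⟨0, hn⟩) ∧ Odd (a j) ∧
    a ⟨0, hn⟩ % 4 = a j % 4 ∧ (a ⟨0, hn⟩ + a j) % 4 = 2 := by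
  obtain ⟨hQtri, hQ01⟩ := hQ
  obtain ⟨hE1, hE2, hE3, hE4⟩ := hE
  obtain ⟨hγ1, hS0, hμ⟩ := hterm
  set i0 : Fin n := ⟨0, hn⟩ with hi0v
  -- basic matrix facts
  have hMN : ∀ i m : Fin n, Mmat Q i m = (if i = m then 1 else 0) + ∑ k, Mmat Q i k * Q k m := by
    intro i m
    have h := congrFun (congrFun (Mmat_mul_one_sub' Q hQtri) i) m
    rw [Matrix.mul_apply] at h
    simp only [Matrix.sub_apply, Matrix.one_apply, mul_sub] at h
    rw [Finset.sum_sub_distrib] at h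
    have h1 : ∑ k, Mmat Q i k * (if k = m then (1:ℤ) else 0) = Mmat Q i m := by
      simp [mul_ite, Finset.sum_ite_eq']
    rw [h1] at h
    linarith
  have hQpp : ∀ p : Fin n, Q p p = 0 := fun p => hQtri p p (lt_irrefl p)
  have hQcol0 : ∀ l : Fin n, Q l i0 = 0 := by
    intro l
    apply hQtri
    intro hlt
    rw [Fin.lt_def] at hlt
    simp [hi0v] at hlt
  have hQj : ∀ l : Fin n, Q l j = if l = i0 then 1 else 0 := by
    intro l
    by_cases h : l = i0
    · rw [if_pos h, h]; exact hj2.1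
    · rw [if_neg h]; exact hj2.2 l h
  have hMcol0 : ∀ k : Fin n, Mmat Q k i0 = if k = i0 then 1 else 0 := by
    intro k
    rw [hMN k i0]
    simp [hQcol0]
  have hMcolj : ∀ k : Fin n, Mmat Q k j = (if k = j then 1 else 0) + (if k = i0 then 1 else 0) := by
    intro k
    rw [hMN k j]
    have : ∑ l, Mmat Q k l * Q l j = Mmat Q k i0 := by
      simp [hQj, mul_ite, Finset.sum_ite_eq']
    rw [this, hMcol0]
  -- u and A
  set u : Fin n → ℤ := fun k => Mmat Q i0 k + Mmat Q j k with hu_def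
  set A : Finset (Fin n) := Finset.univ.filter (fun p => ¬ (2 ∣ u p)) with hA_def
  have hAmem : ∀ p, p ∈ A ↔ ¬ (2 ∣ u p) := by
    intro p; rw [hA_def]; simp
  have hui0 : u i0 = 1 := by
    rw [hu_def]; simp only []
    rw [hMcol0 i0, hMcol0 j, if_pos rfl, if_neg hj0]
    norm_num
  have huj : u j = 2 := by
    rw [hu_def]; simp only []
    rw [hMcolj i0, hMcolj j, if_pos rfl, if_neg hj0, if_neg (Ne.symm hj0)]
    norm_num
  have hi0A : i0 ∈ A := by rw [hAmem, hui0]; norm_num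
  have hjA : j ∉ A := by rw [hAmem, huj]; norm_num
  -- beta, gamma basics
  have hβdef : ∀ i, betaVec Q a i = ∑ k, a k * Mmat Q k i := by
    intro i
    simp [betaVec, Matrix.vecMul, dotProduct]
  have hγdef : ∀ k, gammaVec Q a k = a k - ∑ m, Q k m * a m := by
    intro k
    simp only [gammaVec, Matrix.vecMul, dotProduct, Matrix.transpose_apply,
      Matrix.sub_apply, Matrix.one_apply, mul_sub]
    rw [Finset.sum_sub_distrib]
    congr 1
    · simp [mul_ite, Finset.sum_ite_eq]
    · exact Finset.sum_congr rfl fun m _ => by ring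
  have he01 : ∀ i, epsVec Q a i = 0 ∨ epsVec Q a i = 1 := fun i => Int.emod_two_eq _
  have hβi0 : betaVec Q a i0 = a i0 := by
    rw [hβdef]
    simp [hMcol0, mul_ite, Finset.sum_ite_eq']
  have hβj : betaVec Q a j = a i0 + a j := by
    rw [hβdef]
    have : ∀ k, a k * Mmat Q k j = (if k = j then a k else 0) + (if k = i0 then a k else 0) := by
      intro k; rw [hMcolj k]; split_ifs <;> ring
    rw [Finset.sum_congr rfl fun k _ => this k, Finset.sum_add_distrib]
    simp [Finset.sum_ite_eq']
    ring
  have hei0 : epsVec Q a i0 = 1 := by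
    rcases he01 i0 with h | h
    · exfalso
      have hd := hj3 i0 h
      rw [hMcol0 i0, hMcol0 j, if_pos rfl, if_neg hj0] at hd
      norm_num at hd
    · exact h
  have hAe : ∀ p, p ∈ A → epsVec Q a p = 1 := by
    intro p hp
    rcases he01 p with h | h
    · exfalso
      exact (hAmem p).1 hp (hj3 p h)
    · exact h
  have hai0 : a i0 % 2 = 1 := by
    have := hei0
    rw [show epsVec Q a i0 = a i0 % 2 by simp [epsVec, hβi0]] at this
    exact this
  have haj : a j % 2 = 1 := by
    have h := hj1
    rw [show epsVec Q a j = (a i0 + a j) % 2 by simp [epsVec, hβj]] at h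
    omega
  -- recurrence for u
  have hu_rec : ∀ m, u m = (if i0 = m then 1 else 0) + (if j = m then 1 else 0) + ∑ l, u l * Q l m := by
    intro m
    have h1 := hMN i0 m
    have h2 := hMN j m
    have h3 : ∑ l, u l * Q l m = ∑ l, Mmat Q i0 l * Q l m + ∑ l, Mmat Q j l * Q l m := by
      rw [← Finset.sum_add_distrib]
      exact Finset.sum_congr rfl fun l _ => by rw [hu_def]; ring
    rw [hu_def]; simp only []
    rw [h3]; linarith
  -- generic sum identity
  have hsum_id : ∀ y : Fin n → ℤ, ∑ k, y k * gammaVec Q a k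
      = ∑ m, (y m - ∑ k, y k * Q k m) * a m := by
    intro y
    calc ∑ k, y k * gammaVec Q a k
        = ∑ k, (y k * a k - ∑ m, y k * (Q k m * a m)) := by
          refine Finset.sum_congr rfl fun k _ => ?_
          rw [hγdef k, mul_sub, Finset.mul_sum]
      _ = ∑ k, y k * a k - ∑ k, ∑ m, y k * (Q k m * a m) := Finset.sum_sub_distrib _ _
      _ = ∑ m, y m * a m - ∑ m, ∑ k, y k * (Q k m * a m) := by rw [Finset.sum_comm]
      _ = ∑ m, (y m - ∑ k, y k * Q k m) * a m := by
          rw [← Finset.sum_sub_distrib]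
          refine Finset.sum_congr rfl fun m _ => ?_
          rw [sub_mul, Finset.sum_mul]
          congr 1
          exact Finset.sum_congr rfl fun k _ => by ring
  have hsum_u : ∑ k, u k * gammaVec Q a k = a i0 + a j := by
    rw [hsum_id u]
    have hco : ∀ m, u m - ∑ k, u k * Q k m = (if i0 = m then 1 else 0) + (if j = m then 1 else 0) := by
      intro m; have := hu_rec m; linarith
    calc ∑ m, (u m - ∑ k, u k * Q k m) * a m
        = ∑ m, ((if i0 = m then (1:ℤ) else 0) + (if j = m then 1 else 0)) * a m := by
          exact Finset.sum_congr rfl fun m _ => by rw [hco m]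
      _ = a i0 + a j := by
          have : ∀ m, ((if i0 = m then (1:ℤ) else 0) + (if j = m then 1 else 0)) * a m
              = (if i0 = m then a m else 0) + (if j = m then a m else 0) := by
            intro m; split_ifs <;> ring
          rw [Finset.sum_congr rfl fun m _ => this m, Finset.sum_add_distrib]
          simp [Finset.sum_ite_eq]
  -- x and W
  set x : Fin n → ℤ := fun k => if epsVec Q a k = 1 then u k else u k / 2 with hx_def
  set W : ℤ := ∑ k, x k * gammaVec Q a k with hW_def
  have h2W : a i0 + a j = 2 * W := by
    rw [← hsum_u, hW_def, Finset.mul_sum]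
    refine Finset.sum_congr rfl fun k _ => ?_
    rcases he01 k with h | h
    · have hdvd : 2 ∣ u k := hj3 k h
      rw [hx_def]; simp only [h]
      rw [if_neg (by norm_num)]
      rw [← mul_assoc, Int.mul_ediv_cancel' hdvd]
    · rw [hγ1 k h]
      rw [hx_def]; simp only [h, if_pos rfl]
      ring
  -- N entries
  set Nf : Fin n → Fin n → ℤ := fun p m => (if p = m then 1 else 0) - Q p m with hNf_def
  have hS_apply : ∀ p k : Fin n, Smat Q p k = -∑ m, Nf p m * Nf k m := by
    intro p k
    simp only [Smat, Matrix.neg_apply, Matrix.mul_apply, Matrix.transpose_apply,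
      Matrix.sub_apply, Matrix.one_apply, hNf_def]
  have hco : ∀ m, u m - ∑ k, u k * Q k m
      = (if i0 = m then 1 else 0) + (if j = m then 1 else 0) := by
    intro m; have := hu_rec m; linarith
  have hNf_sum : ∀ (y : Fin n → ℤ) (m : Fin n), ∑ k, Nf k m * y k = y m - ∑ k, y k * Q k m := by
    intro y m
    have hper : ∀ k, Nf k m * y k = (if k = m then y k else 0) - y k * Q k m := by
      intro k; simp only [hNf_def]; split_ifs <;> ring
    rw [Finset.sum_congr rfl fun k _ => hper k, Finset.sum_sub_distrib]
    simp [Finset.sum_ite_eq']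
  have hSy : ∀ (p : Fin n) (y : Fin n → ℤ), ∑ k, Smat Q p k * y k
      = -∑ m, Nf p m * (y m - ∑ k, y k * Q k m) := by
    intro p y
    calc ∑ k, Smat Q p k * y k
        = ∑ k, -((∑ m, Nf p m * Nf k m) * y k) := by
          refine Finset.sum_congr rfl fun k _ => ?_
          rw [hS_apply p k]; ring
      _ = -∑ k, (∑ m, Nf p m * Nf k m) * y k := by rw [← Finset.sum_neg_distrib]
      _ = -∑ k, ∑ m, Nf p m * (Nf k m * y k) := by
          congr 1
          refine Finset.sum_congr rfl fun k _ => ?_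
          rw [Finset.sum_mul]
          exact Finset.sum_congr rfl fun m _ => by ring
      _ = -∑ m, ∑ k, Nf p m * (Nf k m * y k) := by rw [Finset.sum_comm]
      _ = -∑ m, Nf p m * (y m - ∑ k, y k * Q k m) := by
          congr 1
          refine Finset.sum_congr rfl fun m _ => ?_
          rw [← Finset.mul_sum, hNf_sum y m]
  have hSu : ∀ p : Fin n, ∑ k, Smat Q p k * u k = -(if p = j then 1 else 0) := by
    intro p
    rw [hSy p u]
    rw [Finset.sum_congr rfl fun m (_ : m ∈ univ) => by rw [hco m]]
    have hper : ∀ m : Fin n, Nf p m * ((if i0 = m then (1:ℤ) else 0) + (if j = m then 1 else 0))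
        = (if i0 = m then Nf p m else 0) + (if j = m then Nf p m else 0) := by
      intro m; split_ifs <;> ring
    rw [Finset.sum_congr rfl fun m _ => hper m, Finset.sum_add_distrib]
    simp only [Finset.sum_ite_eq, Finset.mem_univ, if_true]
    simp only [hNf_def]
    rw [hQcol0 p, hQj p]
    by_cases h : p = i0
    · have hpj : p ≠ j := fun hh => hj0 (by rw [← hh, h])
      rw [if_pos h, if_neg hpj]
      norm_num
    · rw [if_neg h]
      ring
  set r : Fin n → ℤ := fun p => ∑ m, Q p m with hr_def
  have hr_apply : ∀ p, r p = ∑ m, Q p m := fun p => rfl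
  have hSpp : ∀ p : Fin n, Smat Q p p = -(1 + r p) := by
    intro p
    rw [hS_apply p p]
    have hper : ∀ m, Nf p m * Nf p m
        = (if p = m then 1 else 0) + Q p m - (if p = m then 2 * Q p m else 0) := by
      intro m
      rcases hQ01 p m with hq | hq <;> simp only [hNf_def, hq] <;> split_ifs <;> ring
    rw [Finset.sum_congr rfl fun m _ => hper m, Finset.sum_sub_distrib, Finset.sum_add_distrib]
    simp only [Finset.sum_ite_eq, Finset.mem_univ, if_true, hQpp p, mul_zero]
    rw [hr_def]
    ring
  have hCC : ∀ p k : Fin n, p ≠ k → epsVec Q a p = 1 → epsVec Q a k = 1 →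
      ∑ m, Q p m * Q k m = Q p k + Q k p := by
    intro p k hne hp hk
    have h0 := hS0 p k hne hp hk
    rw [hS_apply p k] at h0
    have hper : ∀ m, Nf p m * Nf k m
        = Q p m * Q k m - (if p = m then Q k m else 0) - (if k = m then Q p m else 0)
          + (if p = m then (if k = m then (1:ℤ) else 0) else 0) := by
      intro m; simp only [hNf_def]; split_ifs <;> ring
    rw [Finset.sum_congr rfl fun m _ => hper m] at h0
    rw [Finset.sum_add_distrib, Finset.sum_sub_distrib, Finset.sum_sub_distrib] at h0
    simp only [Finset.sum_ite_eq, Finset.mem_univ, if_true] at h0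
    rw [if_neg (fun hh => hne hh.symm)] at h0
    linarith
  -- casting
  have ha_inv : ∀ m, betaVec Q a m - ∑ k, Q k m * betaVec Q a k = a m := by
    intro m
    have h2 : ∑ k, Q k m * betaVec Q a k = ∑ p, a p * ∑ k, Mmat Q p k * Q k m := by
      calc ∑ k, Q k m * betaVec Q a k = ∑ k, ∑ p, a p * Mmat Q p k * Q k m := by
            refine Finset.sum_congr rfl fun k _ => ?_
            rw [hβdef k, Finset.mul_sum]
            exact Finset.sum_congr rfl fun p _ => by ring
        _ = ∑ p, ∑ k, a p * Mmat Q p k * Q k m := Finset.sum_comm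
        _ = ∑ p, a p * ∑ k, Mmat Q p k * Q k m := by
            refine Finset.sum_congr rfl fun p _ => ?_
            rw [Finset.mul_sum]
            exact Finset.sum_congr rfl fun k _ => by ring
    rw [hβdef m, h2, ← Finset.sum_sub_distrib]
    have hper : ∀ p, a p * Mmat Q p m - a p * ∑ k, Mmat Q p k * Q k m = if p = m then a p else 0 := by
      intro p
      have h3 := hMN p m
      have h4 : Mmat Q p m - ∑ k, Mmat Q p k * Q k m = if p = m then 1 else 0 := by linarith
      calc a p * Mmat Q p m - a p * ∑ k, Mmat Q p k * Q k m
          = a p * (Mmat Q p m - ∑ k, Mmat Q p k * Q k m) := by ring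
        _ = a p * (if p = m then 1 else 0) := by rw [h4]
        _ = if p = m then a p else 0 := by split_ifs <;> ring
    rw [Finset.sum_congr rfl fun p _ => hper p]
    simp [Finset.sum_ite_eq']
  have hbcast : ∀ k, ((betaVec Q a k : ZMod 2)) = ((epsVec Q a k : ℤ) : ZMod 2) := by
    intro k
    have hsplit : betaVec Q a k = 2 * (betaVec Q a k / 2) + epsVec Q a k := by
      simp only [epsVec]; omega
    rw [hsplit]
    push_cast
    rw [show ((2 : ZMod 2)) = 0 by decide]
    ring
  have hacast : ∀ m, ((a m : ZMod 2)) = ((epsVec Q a m : ℤ) : ZMod 2)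
      + ∑ k, ((Q k m : ZMod 2)) * ((epsVec Q a k : ℤ) : ZMod 2) := by
    intro m
    rw [← ha_inv m]
    push_cast
    rw [CharTwo.sub_eq_add, hbcast m]
    congr 1
    exact Finset.sum_congr rfl fun k _ => by rw [hbcast k]
  have h01 : ∀ z : ZMod 2, z = 0 ∨ z = 1 := by decide
  -- r is odd on eps = 1
  have hrodd : ∀ p : Fin n, epsVec Q a p = 1 → r p % 2 = 1 := by
    intro p hp
    apply cast_eq_one_iff_odd
    have hgp : a p = ∑ l, Q p l * a l := by
      have hg := hγ1 p hp; rw [hγdef p] at hg; linarith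
    have hc : ((a p : ZMod 2)) = ∑ l, ((Q p l : ZMod 2)) * ((a l : ZMod 2)) := by
      rw [hgp]; push_cast; rfl
    rw [hacast p] at hc
    have hsub : ∀ l, ((Q p l : ZMod 2)) * ((a l : ZMod 2))
        = ((Q p l : ZMod 2)) * ((epsVec Q a l : ℤ) : ZMod 2)
          + ∑ k, ((Q p l : ZMod 2)) * (((Q k l : ZMod 2)) * ((epsVec Q a k : ℤ) : ZMod 2)) := by
      intro l
      rw [hacast l, mul_add, Finset.mul_sum]
    rw [Finset.sum_congr rfl fun l _ => hsub l, Finset.sum_add_distrib, Finset.sum_comm] at hc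
    -- inner double sum: ∑ k ∑ l (Qpl Qkl) εk
    have hdd : ∀ k, ∑ l, ((Q p l : ZMod 2)) * (((Q k l : ZMod 2)) * ((epsVec Q a k : ℤ) : ZMod 2))
        = ((epsVec Q a k : ℤ) : ZMod 2) * (((∑ l, Q p l * Q k l : ℤ)) : ZMod 2) := by
      intro k
      push_cast
      rw [Finset.mul_sum]
      exact Finset.sum_congr rfl fun l _ => by ring
    rw [Finset.sum_congr rfl fun k _ => hdd k] at hc
    have hdd2 : ∀ k, ((epsVec Q a k : ℤ) : ZMod 2) * (((∑ l, Q p l * Q k l : ℤ)) : ZMod 2)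
        = ((epsVec Q a k : ℤ) : ZMod 2) * (((Q p k : ZMod 2)) + ((Q k p : ZMod 2)))
          + (if k = p then ((r p : ZMod 2)) else 0) := by
      intro k
      by_cases hk : k = p
      · subst hk
        rw [if_pos rfl, hp]
        have : ∑ l, Q k l * Q k l = r k := by
          rw [hr_def]
          exact Finset.sum_congr rfl fun l _ => by rcases hQ01 k l with h | h <;> rw [h] <;> ring
        rw [this, hQpp k]
        push_cast
        ring
      · rw [if_neg hk]
        rcases he01 k with h | h
        · rw [h]; push_cast; ring
        · rw [hCC p k (fun hh => hk hh.symm) hp h]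
          push_cast
          ring
    rw [Finset.sum_congr rfl fun k _ => hdd2 k, Finset.sum_add_distrib] at hc
    rw [Finset.sum_ite_eq' univ p (fun _ => ((r p : ZMod 2)))] at hc
    rw [if_pos (Finset.mem_univ p)] at hc
    have hsplit2 : ∀ k, ((epsVec Q a k : ℤ) : ZMod 2) * (((Q p k : ZMod 2)) + ((Q k p : ZMod 2)))
        = ((Q p k : ZMod 2)) * ((epsVec Q a k : ℤ) : ZMod 2)
          + ((Q k p : ZMod 2)) * ((epsVec Q a k : ℤ) : ZMod 2) := fun k => by ring
    rw [Finset.sum_congr rfl fun k _ => hsplit2 k, Finset.sum_add_distrib] at hc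
    rw [hp] at hc
    push_cast at hc
    -- hc : 1 + Sa = Sb + ((Sb + Sa) + R)
    rcases h01 ((r p : ZMod 2)) with hR | hR
    · exfalso
      rw [hR] at hc
      rcases h01 (∑ k, ((Q k p : ZMod 2)) * ((epsVec Q a k : ℤ) : ZMod 2)) with h1 | h1 <;>
        rcases h01 (∑ l, ((Q p l : ZMod 2)) * ((epsVec Q a l : ℤ) : ZMod 2)) with h2 | h2 <;>
          rw [h1, h2] at hc <;> revert hc <;> decide
    · exact hR
  have hx1 : ∀ k, epsVec Q a k = 1 → x k = u k := by
    intro k h; rw [hx_def]; simp [h]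
  have hx0 : ∀ k, epsVec Q a k = 0 → x k = u k / 2 := by
    intro k h; rw [hx_def]; simp [h]
  have hT : ∀ p : Fin n, epsVec Q a p = 1 → 2 * (∑ k, Smat Q p k * x k) = -(1 + r p) * u p := by
    intro p hp
    have hpj : p ≠ j := fun h => by rw [h, hj1] at hp; norm_num at hp
    have hper : ∀ k, 2 * (Smat Q p k * x k)
        = Smat Q p k * u k + (if k = p then Smat Q p p * u p else 0) := by
      intro k
      by_cases hk : k = p
      · subst hk
        rw [if_pos rfl, hx1 k hp]
        ring
      · rw [if_neg hk]
        rcases he01 k with h | h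
        · have hdvd : 2 ∣ u k := hj3 k h
          rw [hx0 k h]
          rw [show Smat Q p k * u k = Smat Q p k * (2 * (u k / 2)) by rw [Int.mul_ediv_cancel' hdvd]]
          ring
        · rw [hS0 p k (fun hh => hk hh.symm) hp h]
          ring
    calc 2 * ∑ k, Smat Q p k * x k = ∑ k, 2 * (Smat Q p k * x k) := Finset.mul_sum _ _ _
      _ = ∑ k, (Smat Q p k * u k + (if k = p then Smat Q p p * u p else 0)) :=
          Finset.sum_congr rfl fun k _ => hper k
      _ = (∑ k, Smat Q p k * u k) + Smat Q p p * u p := by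
          rw [Finset.sum_add_distrib]
          congr 1
          simp [Finset.sum_ite_eq']
      _ = -(1 + r p) * u p := by
          rw [hSu p, if_neg hpj, hSpp p]
          ring
  have h20 : ((2 : ZMod 2)) = 0 := by decide
  have hu_cast : ∀ p : Fin n, ((u p : ZMod 2)) = if p ∈ A then 1 else 0 := by
    intro p
    by_cases hpA : p ∈ A
    · rw [if_pos hpA]
      have hnd := (hAmem p).1 hpA
      have hsp : u p = 2 * (u p / 2) + 1 := by omega
      rw [hsp]; push_cast; rw [h20]; ring
    · rw [if_neg hpA]
      have heven : 2 ∣ u p := by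
        by_contra hcon
        exact hpA ((hAmem p).2 hcon)
      exact (ZMod.intCast_zmod_eq_zero_iff_dvd (u p) 2).2 (by exact_mod_cast heven)
  set v : Fin n → ℤ := fun m => x m - ∑ k, x k * Q k m with hv_def
  have hW2 : ((W : ZMod 2)) = ∑ p, ((epsVec Q a p : ℤ) : ZMod 2)
      * ((v p + ∑ m, Q p m * v m : ℤ) : ZMod 2) := by
    have h1 : W = ∑ m, v m * a m := by
      rw [hW_def, hsum_id x]
    calc ((W : ZMod 2)) = ∑ m, ((v m : ZMod 2)) * ((a m : ZMod 2)) := by rw [h1]; push_cast; rfl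
      _ = ∑ m, ((v m : ZMod 2)) * (((epsVec Q a m : ℤ) : ZMod 2)
            + ∑ k, ((Q k m : ZMod 2)) * ((epsVec Q a k : ℤ) : ZMod 2)) :=
          Finset.sum_congr rfl fun m _ => by rw [hacast m]
      _ = ∑ m, (((epsVec Q a m : ℤ) : ZMod 2) * ((v m : ZMod 2))
            + ∑ k, ((epsVec Q a k : ℤ) : ZMod 2) * (((Q k m : ZMod 2)) * ((v m : ZMod 2)))) := by
          refine Finset.sum_congr rfl fun m _ => ?_
          rw [mul_add, Finset.mul_sum]
          congr 1
          · ring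
          · exact Finset.sum_congr rfl fun k _ => by ring
      _ = ∑ m, ((epsVec Q a m : ℤ) : ZMod 2) * ((v m : ZMod 2))
          + ∑ k, ∑ m, ((epsVec Q a k : ℤ) : ZMod 2) * (((Q k m : ZMod 2)) * ((v m : ZMod 2))) := by
          rw [Finset.sum_add_distrib, Finset.sum_comm (s := univ) (t := univ)]
      _ = ∑ p, (((epsVec Q a p : ℤ) : ZMod 2) * ((v p : ZMod 2))
          + ((epsVec Q a p : ℤ) : ZMod 2) * ∑ m, ((Q p m : ZMod 2)) * ((v m : ZMod 2))) := by
          rw [← Finset.sum_add_distrib]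
          exact Finset.sum_congr rfl fun p _ => by rw [Finset.mul_sum]
      _ = ∑ p, ((epsVec Q a p : ℤ) : ZMod 2) * ((v p + ∑ m, Q p m * v m : ℤ) : ZMod 2) := by
          refine Finset.sum_congr rfl fun p _ => ?_
          push_cast
          ring
  have hvNN : ∀ p, v p - ∑ m, Q p m * v m = -∑ k, Smat Q p k * x k := by
    intro p
    rw [hSy p x, neg_neg]
    have hper : ∀ m : Fin n, Nf p m * (x m - ∑ k, x k * Q k m)
        = (if p = m then v m else 0) - Q p m * v m := by
      intro m
      rw [hv_def]
      simp only [hNf_def]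
      split_ifs <;> ring
    rw [Finset.sum_congr rfl fun m _ => hper m, Finset.sum_sub_distrib]
    simp [Finset.sum_ite_eq]
  have hper2 : ∀ p, ((epsVec Q a p : ℤ) : ZMod 2) * ((v p + ∑ m, Q p m * v m : ℤ) : ZMod 2)
      = if p ∈ A then ((r p / 2 + 1 : ℤ) : ZMod 2) else 0 := by
    intro p
    rcases he01 p with hp | hp
    · have hpA : p ∉ A := fun hm => by rw [hAe p hm] at hp; norm_num at hp
      rw [if_neg hpA, hp]
      push_cast
      ring
    · have hrp : r p % 2 = 1 := hrodd p hp
      have hT2 := hT p hp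
      obtain ⟨w, hw⟩ : ∃ w, r p = 2 * w + 1 := ⟨r p / 2, by omega⟩
      have hw2 : r p / 2 = w := by omega
      have hTval : ∑ k, Smat Q p k * x k = -((w + 1) * u p) := by
        apply mul_left_cancel₀ (show (2:ℤ) ≠ 0 by norm_num)
        rw [hT2, hw]
        ring
      have hvv : v p + ∑ m, Q p m * v m = (w + 1) * u p + 2 * ∑ m, Q p m * v m := by
        have h5 := hvNN p
        rw [hTval] at h5
        linarith
      rw [hvv, hp, hw2]
      push_cast
      rw [h20, hu_cast p]
      by_cases hpA : p ∈ A
      · rw [if_pos hpA, if_pos hpA]; push_cast; ring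
      · rw [if_neg hpA, if_neg hpA]; ring
  set P : ℤ := ∑ p ∈ A, (r p / 2 + 1) with hP_def
  have hWP : ((W : ZMod 2)) = ((P : ZMod 2)) := by
    rw [hW2, Finset.sum_congr rfl fun p _ => hper2 p]
    rw [Finset.sum_ite_mem, Finset.univ_inter, hP_def]
    push_cast
    rfl
  -- counting
  set c : Fin n → ℤ := fun m => ∑ p ∈ A, Q p m with hc_def
  have hc_apply : ∀ m, c m = ∑ p ∈ A, Q p m := fun m => rfl
  have hc_bound : ∀ m, 0 ≤ c m ∧ c m ≤ 2 := by
    intro m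
    constructor
    · rw [hc_apply]
      apply Finset.sum_nonneg
      intro p _
      rcases hQ01 p m with h | h <;> rw [h] <;> norm_num
    · rw [hc_apply]
      have h1 : ∑ p ∈ A, Q p m = ((A.filter (fun p => Q p m = 1)).card : ℤ) := by
        rw [Finset.card_filter]
        push_cast
        exact Finset.sum_congr rfl fun p _ => by rcases hQ01 p m with h | h <;> simp [h]
      rw [h1]
      have h2 : (A.filter (fun p => Q p m = 1)).card ≤ (univ.filter (fun p => Q p m = 1)).card :=
        Finset.card_le_card (Finset.filter_subset_filter _ (Finset.subset_univ A))
      have h3 := hE2 m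
      exact_mod_cast le_trans h2 h3
  have hc_cast : ∀ m, ((c m : ZMod 2)) = (if m ∈ A then 1 else 0)
      + (((if i0 = m then (1:ℤ) else 0) : ZMod 2) + ((if j = m then (1:ℤ) else 0) : ZMod 2)) := by
    intro m
    have h2 : ((u m : ZMod 2)) = ((if i0 = m then (1:ℤ) else 0) : ZMod 2)
        + ((if j = m then (1:ℤ) else 0) : ZMod 2) + ∑ l, ((u l : ZMod 2)) * ((Q l m : ZMod 2)) := by
      rw [hu_rec m]; push_cast; rfl
    have h3 : ∑ l, ((u l : ZMod 2)) * ((Q l m : ZMod 2)) = ((c m : ZMod 2)) := by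
      rw [Finset.sum_congr rfl (fun l (_ : l ∈ univ) => by rw [hu_cast l])]
      have hif : ∀ l, (if l ∈ A then (1:ZMod 2) else 0) * ((Q l m : ZMod 2))
          = if l ∈ A then ((Q l m : ZMod 2)) else 0 := fun l => by split_ifs <;> ring
      rw [Finset.sum_congr rfl fun l _ => hif l, Finset.sum_ite_mem, Finset.univ_inter,
        hc_apply m]
      push_cast
      rfl
    rw [h3, hu_cast m] at h2
    rw [h2]
    have hgen : ∀ X D1 D2 : ZMod 2, X = D1 + D2 + X + (D1 + D2) := by decide
    exact hgen _ _ _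
  have hci0 : c i0 = 0 := by
    rw [hc_apply]; exact Finset.sum_eq_zero fun p _ => hQcol0 p
  have hcj : c j = 1 := by
    rw [hc_apply]
    rw [Finset.sum_congr rfl fun p (_ : p ∈ A) => hQj p]
    rw [Finset.sum_ite_eq' A i0 (fun _ => (1:ℤ))]
    rw [if_pos hi0A]
  have hAc : ∀ l ∈ A, c l = if l = i0 then 0 else 1 := by
    intro l hl
    by_cases h : l = i0
    · rw [if_pos h, h, hci0]
    · rw [if_neg h]
      have hlj : l ≠ j := fun hh => hjA (hh ▸ hl)
      have hcc := hc_cast l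
      rw [if_pos hl, if_neg (fun hh : i0 = l => h hh.symm), if_neg (fun hh : j = l => hlj hh.symm)] at hcc
      norm_num at hcc
      have hodd := cast_eq_one_iff_odd _ hcc
      have hb := hc_bound l
      omega
  have ho1 : 1 ≤ A.card := Finset.card_pos.2 ⟨i0, hi0A⟩
  have hsum_cA : ∑ l ∈ A, c l = (A.card : ℤ) - 1 := by
    rw [Finset.sum_congr rfl hAc]
    have hper : ∀ l : Fin n, (if l = i0 then (0:ℤ) else 1) = 1 - (if l = i0 then 1 else 0) := by
      intro l; split_ifs <;> ring
    rw [Finset.sum_congr rfl fun l _ => hper l, Finset.sum_sub_distrib, Finset.sum_const,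
      Finset.sum_ite_eq' A i0 (fun _ => (1:ℤ)), if_pos hi0A]
    push_cast
    ring
  have hfub : ∑ p ∈ A, r p = ∑ m, c m := by
    rw [Finset.sum_congr rfl (fun p (_ : p ∈ A) => hr_apply p), Finset.sum_comm]
  have hdiagA : ∑ k ∈ A, ∑ l ∈ A, Q k l = (A.card : ℤ) - 1 := by
    exact Finset.sum_comm.trans hsum_cA
  have hsq : ∑ m, c m * c m = (∑ p ∈ A, r p) + 2 * ((A.card : ℤ) - 1) := by
    have h1 : ∀ m : Fin n, c m * c m = ∑ k ∈ A, ∑ l ∈ A, Q k m * Q l m := by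
      intro m; rw [hc_apply]
      rw [Finset.sum_mul_sum]
    rw [Finset.sum_congr rfl fun m _ => h1 m]
    rw [Finset.sum_comm]
    have h2 : ∀ k ∈ A, ∑ m, ∑ l ∈ A, Q k m * Q l m = ∑ l ∈ A, ∑ m, Q k m * Q l m := fun k _ => Finset.sum_comm
    rw [Finset.sum_congr rfl h2]
    have h3 : ∀ k ∈ A, ∀ l ∈ A, ∑ m, Q k m * Q l m = (if k = l then r k else 0) + (Q k l + Q l k) := by
      intro k hk l hl
      by_cases h : k = l
      · subst h
        rw [if_pos rfl]
        have hd : ∑ m, Q k m * Q k m = r k := by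
          rw [hr_apply]
          exact Finset.sum_congr rfl fun m _ => by rcases hQ01 k m with hq | hq <;> rw [hq] <;> ring
        rw [hd, hQpp k]
        ring
      · rw [if_neg h, hCC k l h (hAe k hk) (hAe l hl)]
        ring
    have h4 : ∀ k ∈ A, ∑ l ∈ A, ∑ m, Q k m * Q l m
        = r k + (∑ l ∈ A, Q k l + ∑ l ∈ A, Q l k) := by
      intro k hk
      rw [Finset.sum_congr rfl (h3 k hk), Finset.sum_add_distrib, Finset.sum_add_distrib]
      rw [Finset.sum_ite_eq A k (fun _ => r k), if_pos hk]
    rw [Finset.sum_congr rfl h4, Finset.sum_add_distrib, Finset.sum_add_distrib]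
    have h5 : ∑ k ∈ A, ∑ l ∈ A, Q l k = ∑ k ∈ A, ∑ l ∈ A, Q k l := Finset.sum_comm
    rw [h5, hdiagA]
    ring
  have hc_id : ∀ m, c m = (if (m ∈ A ∧ m ≠ i0) ∨ m = j then 1 else 0) + c m * (c m - 1) := by
    intro m
    by_cases hmj : m = j
    · subst hmj
      rw [hcj, if_pos (Or.inr rfl)]
      ring
    · by_cases hmi : m = i0
      · subst hmi
        rw [hci0, if_neg]
        · ring
        · rintro (⟨_, hne⟩ | hh)
          · exact hne rfl
          · exact hmj hh
      · have hb := hc_bound m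
        have hcc := hc_cast m
        rw [if_neg (fun hh : i0 = m => hmi hh.symm), if_neg (fun hh : j = m => hmj hh.symm)] at hcc
        norm_num at hcc
        by_cases hmA : m ∈ A
        · rw [if_pos hmA] at hcc
          have hodd := cast_eq_one_iff_odd _ hcc
          rw [if_pos (Or.inl ⟨hmA, hmi⟩)]
          have : c m = 1 := by omega
          rw [this]; ring
        · rw [if_neg hmA] at hcc
          have heven := cast_eq_zero_iff_even _ hcc
          rw [if_neg (by rintro (⟨hh, _⟩ | hh); exact hmA hh; exact hmj hh)]
          have : c m = 0 ∨ c m = 2 := by omega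
          rcases this with h | h <;> rw [h] <;> ring
  have hsum_ind : ∑ m, (if (m ∈ A ∧ m ≠ i0) ∨ m = j then (1:ℤ) else 0) = (A.card : ℤ) := by
    rw [Finset.sum_boole]
    congr 1
    have hset : univ.filter (fun m => (m ∈ A ∧ m ≠ i0) ∨ m = j) = (A.erase i0) ∪ {j} := by
      ext m
      simp only [Finset.mem_filter, Finset.mem_univ, true_and, Finset.mem_union,
        Finset.mem_erase, Finset.mem_singleton]
      exact or_congr and_comm Iff.rfl
    rw [hset, Finset.card_union_of_disjoint]
    · rw [Finset.card_erase_of_mem hi0A, Finset.card_singleton]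
      omega
    · rw [Finset.disjoint_singleton_right]
      intro hmem
      exact hjA (Finset.mem_of_mem_erase hmem)
  have hRval : ∑ p ∈ A, r p = 3 * (A.card : ℤ) - 2 := by
    have h1 : ∑ m, c m = (A.card : ℤ) + (∑ m, c m * c m - ∑ m, c m) := by
      calc ∑ m, c m
          = ∑ m, ((if (m ∈ A ∧ m ≠ i0) ∨ m = j then (1:ℤ) else 0) + c m * (c m - 1)) :=
            Finset.sum_congr rfl fun m _ => hc_id m
        _ = (∑ m, (if (m ∈ A ∧ m ≠ i0) ∨ m = j then (1:ℤ) else 0)) + ∑ m, c m * (c m - 1) :=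
            Finset.sum_add_distrib
        _ = (A.card : ℤ) + (∑ m, c m * c m - ∑ m, c m) := by
            rw [hsum_ind]
            congr 1
            rw [← Finset.sum_sub_distrib]
            exact Finset.sum_congr rfl fun m _ => by ring
    have h2 := hsq
    have h3 := hfub
    linarith
  have hPval : P = 2 * (A.card : ℤ) - 1 := by
    have h2 : 2 * P = ∑ p ∈ A, (2 * (r p / 2) + 2) := by
      rw [hP_def, Finset.mul_sum]
      exact Finset.sum_congr rfl fun p _ => by ring
    have h3 : ∀ p ∈ A, 2 * (r p / 2) + 2 = r p + 1 := by
      intro p hp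
      have := hrodd p (hAe p hp)
      omega
    have hone : ∑ p ∈ A, (1:ℤ) = (A.card : ℤ) := by simp
    rw [Finset.sum_congr rfl h3, Finset.sum_add_distrib, hRval, hone] at h2
    omega
  have hWcast : ((W : ZMod 2)) = 1 := by
    rw [hWP, hPval]
    push_cast
    rw [h20]
    rw [zero_mul, zero_sub]
    decide
  have hWodd : W % 2 = 1 := cast_eq_one_iff_odd W hWcast
  exact ⟨Int.odd_iff.2 hai0, Int.odd_iff.2 haj, by omega, by omega⟩
end
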